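/- Let $G$ be a compact topological group acting freely and continuously on a compact Hausdorff space $X$, and let $f : X \to X$ be a continuous $G$-equivariant map. For the inverse system $\cdots \xrightarrow{f} X \xrightarrow{f} X \xrightarrow{f} X$ indexed by the natural numbers, the orbit space $(\varprojlim X)/G$ is homeomorphic to $\varprojlim (X/G)$, where the bonding maps of the second system are the maps $\overline{f} : X/G \to X/G$ induced by $f$. -/

import Mathlib

open MulAction

/-- The coordinatewise orbit relation of `G` on the inverse limit of the
constant system `⋯ → X → X → X` with bonding map `f`. -/
def seqOrbitSetoid (G : Type*) [Group G] (X : Type*) [TopologicalSpace X]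
    [MulAction G X] (f : X → X) :
    Setoid {s : ℕ → X // ∀ n, f (s (n + 1)) = s n} where
  r x y := ∃ g : G, ∀ n, g • y.1 n = x.1 n
  iseqv := by
    constructor
    · exact fun x => ⟨1, fun n => one_smul _ _⟩
    · rintro x y ⟨g, hg⟩
      exact ⟨g⁻¹, fun n => by rw [← hg n, inv_smul_smul]⟩
    · rintro x y z ⟨g, hg⟩ ⟨g', hg'⟩
      exact ⟨g * g', fun n => by rw [mul_smul, hg' n, hg n]⟩

/-- The map induced by a `G`-equivariant map `f : X → X` on the orbit space. -/
def orbitMapOfEquivariant (G : Type*) [Group G] (X : Type*) [TopologicalSpace X]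
    [MulAction G X] (f : X → X) (hequiv : ∀ (g : G) (x : X), f (g • x) = g • f x) :
    Quotient (orbitRel G X) → Quotient (orbitRel G X) :=
  Quotient.lift (fun x => Quotient.mk (orbitRel G X) (f x)) <| by
    rintro a b hab
    obtain ⟨g, rfl⟩ : ∃ g : G, g • b = a := hab
    exact Quotient.sound ⟨g, (hequiv g b).symm⟩

/-- For a compact group `G` acting freely on a compact Hausdorff space `X` and
a `G`-equivariant map `f : X → X`, the orbit space of the inverse limit of the
system `⋯ → X → X → X` is homeomorphic to the inverse limit of the induced
system `⋯ → X/G → X/G → X/G`. -/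
theorem orbit_space_of_limit_homeomorphic (G : Type*) [Group G] [TopologicalSpace G]
    [IsTopologicalGroup G] [CompactSpace G]
    (X : Type*) [TopologicalSpace X] [CompactSpace X] [T2Space X]
    [MulAction G X] [ContinuousSMul G X]
    (hfree : ∀ (g : G) (x : X), g • x = x → g = 1)
    (f : X → X) (hf : Continuous f)
    (hequiv : ∀ (g : G) (x : X), f (g • x) = g • f x) :
    Nonempty (Quotient (seqOrbitSetoid G X f) ≃ₜ
      {t : ℕ → Quotient (orbitRel G X) //
        ∀ n, orbitMapOfEquivariant G X f hequiv (t (n + 1)) = t n}) := by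
  classical
  -- the action is proper, so the orbit space is T2
  haveI hps : ProperSMul G X :=
    ⟨((continuous_fst.smul continuous_snd).prodMk continuous_snd).isProperMap⟩
  haveI hT2Q : T2Space (Quotient (orbitRel G X)) :=
    t2Space_quotient_mulAction_of_properSMul
  set π : X → Quotient (orbitRel G X) := Quotient.mk (orbitRel G X) with hπ
  have hπc : Continuous π := continuous_quotient_mk'
  set L := {s : ℕ → X // ∀ n, f (s (n + 1)) = s n} with hL
  -- L is compact
  haveI : CompactSpace L := by
    have hset : {s : ℕ → X | ∀ n, f (s (n + 1)) = s n} =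
        ⋂ n, {s : ℕ → X | f (s (n + 1)) = s n} := by ext s; simp [Set.mem_iInter]
    have hcl : IsClosed {s : ℕ → X | ∀ n, f (s (n + 1)) = s n} := by
      rw [hset]
      exact isClosed_iInter fun n => isClosed_eq (hf.comp (continuous_apply (n + 1)))
        (continuous_apply n)
    exact isCompact_iff_compactSpace.mp hcl.isCompact
  -- the underlying map
  have hmapwd : ∀ (s : L) (n : ℕ),
      orbitMapOfEquivariant G X f hequiv (π (s.1 (n + 1))) = π (s.1 n) := by
    intro s n
    have hr : orbitMapOfEquivariant G X f hequiv (π (s.1 (n + 1))) =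
        π (f (s.1 (n + 1))) := rfl
    rw [hr, s.2 n]
  have hwd : ∀ a b : L, (seqOrbitSetoid G X f).r a b →
      (⟨fun n => π (a.1 n), hmapwd a⟩ :
        {t : ℕ → Quotient (orbitRel G X) //
          ∀ n, orbitMapOfEquivariant G X f hequiv (t (n + 1)) = t n}) =
      ⟨fun n => π (b.1 n), hmapwd b⟩ := by
    rintro a b ⟨g, hg⟩
    refine Subtype.ext (funext fun n => ?_)
    exact Quotient.sound ⟨g, hg n⟩
  set F : Quotient (seqOrbitSetoid G X f) →
      {t : ℕ → Quotient (orbitRel G X) //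
        ∀ n, orbitMapOfEquivariant G X f hequiv (t (n + 1)) = t n} :=
    Quotient.lift (fun s : L => ⟨fun n => π (s.1 n), hmapwd s⟩) hwd with hF
  have hFc : Continuous F := by
    apply Continuous.quotient_lift
    exact Continuous.subtype_mk
      (continuous_pi fun n => hπc.comp ((continuous_apply n).comp continuous_subtype_val)) _
  have hFinj : Function.Injective F := by
    intro a b
    refine Quotient.inductionOn₂ a b ?_
    intro x y hxy
    have h1 : ∀ n, π (x.1 n) = π (y.1 n) := fun n =>
      congrFun (congrArg Subtype.val hxy) n
    -- for each n get a group element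
    have h2 : ∀ n, ∃ g : G, g • y.1 n = x.1 n := by
      intro n
      have h := Quotient.exact (h1 n)
      obtain ⟨g, hg⟩ := h
      exact ⟨g, hg⟩
    choose g hg using h2
    have hsame : ∀ n, g (n + 1) = g n := by
      intro n
      have e1 : f (x.1 (n + 1)) = x.1 n := x.2 n
      have e2 : g (n + 1) • y.1 n = x.1 n := by
        rw [← y.2 n, ← hequiv, hg (n + 1), e1]
      have : ((g n)⁻¹ * g (n + 1)) • y.1 n = y.1 n := by
        rw [mul_smul, e2, ← hg n, inv_smul_smul]
      have := hfree _ _ this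
      rw [inv_mul_eq_one] at this
      exact this.symm
    have hconst : ∀ n, g n = g 0 := by
      intro n; induction n with
      | zero => rfl
      | succ k ih => rw [hsame k, ih]
    refine Quotient.sound ⟨g 0, fun n => ?_⟩
    rw [← hconst n]; exact hg n
  have hFsurj : Function.Surjective F := by
    intro t
    -- decreasing sequence of closed nonempty sets of partial lifts
    set C : ℕ → Set (ℕ → X) := fun n =>
      {s | (∀ k < n, f (s (k + 1)) = s k) ∧ ∀ k, π (s k) = t.1 k} with hC
    have hclosed : ∀ n, IsClosed (C n) := by
      intro n
      have hCn : C n = (⋂ k, ⋂ _ : k < n, {s : ℕ → X | f (s (k + 1)) = s k}) ∩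
          ⋂ k, {s : ℕ → X | π (s k) = t.1 k} := by
        ext s; simp [hC, Set.mem_iInter]
      rw [hCn]
      apply IsClosed.inter
      · exact isClosed_iInter fun k => isClosed_iInter fun _ =>
          isClosed_eq (hf.comp (continuous_apply (k + 1))) (continuous_apply k)
      · exact isClosed_iInter fun k =>
          isClosed_eq (hπc.comp (continuous_apply k)) continuous_const
    have hmono : ∀ n, C (n + 1) ⊆ C n := by
      intro n s hs
      exact ⟨fun k hk => hs.1 k (hk.trans (Nat.lt_succ_self n)), hs.2⟩
    have hne : ∀ n, (C n).Nonempty := by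
      intro n
      obtain ⟨x₀, hx₀⟩ : ∃ x, π x = t.1 n := Quotient.exists_rep (t.1 n)
      refine ⟨fun k => if k ≤ n then f^[n - k] x₀ else Quotient.out (t.1 k), ?_, ?_⟩
      · intro k hk
        have hk1 : k + 1 ≤ n := hk
        simp only [if_pos hk1, if_pos (le_of_lt hk)]
        rw [← Function.iterate_succ_apply' f (n - (k + 1)) x₀]
        congr 1
        omega
      · -- first show the iterates project correctly
        have key : ∀ j, j ≤ n → π (f^[j] x₀) = t.1 (n - j) := by
          intro j
          induction j with
          | zero => intro _; simpa using hx₀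
          | succ i ih =>
            intro hij
            have hi : i ≤ n := le_of_lt hij
            rw [Function.iterate_succ_apply']
            have : π (f (f^[i] x₀)) =
                orbitMapOfEquivariant G X f hequiv (π (f^[i] x₀)) := rfl
            rw [this, ih hi]
            have hrw : n - i = (n - (i + 1)) + 1 := by omega
            rw [hrw]
            exact t.2 (n - (i + 1))
        intro k
        by_cases hk : k ≤ n
        · simp only [if_pos hk]
          have := key (n - k) (Nat.sub_le n k)
          rwa [Nat.sub_sub_self hk] at this
        · simp only [if_neg hk]
          exact Quotient.out_eq (t.1 k)
    have hint : (⋂ n, C n).Nonempty := by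
      apply IsCompact.nonempty_iInter_of_sequence_nonempty_isCompact_isClosed
        C hmono hne ((hclosed 0).isCompact) hclosed
    obtain ⟨s, hs⟩ := hint
    simp only [Set.mem_iInter] at hs
    have hs1 : ∀ k, f (s (k + 1)) = s k := fun k => (hs (k + 2)).1 k (by omega)
    have hs2 : ∀ k, π (s k) = t.1 k := (hs 0).2
    exact ⟨Quotient.mk _ ⟨s, hs1⟩, Subtype.ext (funext hs2)⟩
  exact ⟨hFc.homeoOfEquivCompactToT2 (f := Equiv.ofBijective F ⟨hFinj, hFsurj⟩)⟩
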